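/- Assume in addition that A is Noetherian and integrally closed. For all nonzero f, g ∈ A: (1) the natural map A^{1/p^∞} → Hom_{A^{1/p^∞}}(g^{1/p^∞}A^{1/p^∞}, A^{1/p^∞}), sending x to multiplication by x, is an isomorphism; (2) the induced map A^{1/p^∞}/(f) → Hom_{A^{1/p^∞}}(g^{1/p^∞}A^{1/p^∞}, A^{1/p^∞}/(f)) is injective. -/

import Mathlib

open Polynomial

lemma aux_root {A F : Type*} [CommRing A] [IsDomain A] [IsIntegrallyClosed A]
    [Field F] [Algebra A F] [IsFractionRing A F]
    (t : F) (k : ℕ) (hk : k ≠ 0) (e : A) (ht : t ^ k = algebraMap A F e) :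
    ∃ w : A, algebraMap A F w = t := by
  refine IsIntegrallyClosed.isIntegral_iff.mp ?_
  refine ⟨X ^ k - C e, monic_X_pow_sub_C e hk, ?_⟩
  simp [eval₂_sub, eval₂_pow, eval₂_X, eval₂_C, ht]

lemma aux_stab {A : Type*} [CommRing A] [IsNoetherianRing A] (c : ℕ → A) :
    ∃ N : ℕ, ∃ e : Fin (N + 1) → A, ∑ i, e i * c i = c (N + 1) := by
  have mono : Monotone (fun m => Ideal.span (Set.range (fun i : Fin (m + 1) => c i))) := by
    intro m m' h
    apply Ideal.span_mono
    rintro _ ⟨i, rfl⟩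
    exact ⟨⟨i.1, by omega⟩, rfl⟩
  obtain ⟨N, hN⟩ := monotone_stabilizes_iff_noetherian.mpr inferInstance ⟨_, mono⟩
  have h1 : c (N + 1) ∈ Ideal.span (Set.range fun i : Fin (N + 1 + 1) => c i) :=
    Ideal.subset_span ⟨⟨N + 1, by omega⟩, rfl⟩
  have h2 := hN (N + 1) (by omega)
  simp only [OrderHom.coe_mk] at h2
  rw [← h2] at h1
  obtain ⟨e, he⟩ := (Submodule.mem_span_range_iff_exists_fun A).mp h1
  exact ⟨N, e, by simpa [smul_eq_mul] using he⟩

lemma aux_core {A : Type*} [CommRing A] [IsDomain A] [IsNoetherianRing A] [IsIntegrallyClosed A]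
    (p : ℕ) (hp : 1 < p) (a a' g : A) (ha' : a' ≠ 0) (hg : g ≠ 0)
    (c : ℕ → A) (hc : ∀ m, c m * a' ^ p ^ m = a ^ p ^ m * g) :
    ∃ w : A, w * a' = a := by
  set F := FractionRing A
  set φ := algebraMap A F with hφdef
  have hφ : Function.Injective φ := IsFractionRing.injective A F
  have hφa' : φ a' ≠ 0 := fun h => ha' (hφ (by simpa using h))
  have hφg : φ g ≠ 0 := fun h => hg (hφ (by simpa using h))
  set z : F := φ a / φ a' with hzdef
  have hz : ∀ m, z ^ p ^ m * φ g = φ (c m) := by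
    intro m
    have h1 : (φ a') ^ p ^ m ≠ 0 := pow_ne_zero _ hφa'
    rw [hzdef, div_pow, div_mul_eq_mul_div, div_eq_iff h1, ← map_pow, ← map_pow, ← map_mul,
      ← map_mul]
    exact congrArg φ (hc m).symm
  obtain ⟨N, e, he⟩ := aux_stab c
  have hzN : z ^ p ^ (N + 1) = ∑ i : Fin (N + 1), φ (e i) * z ^ p ^ (i : ℕ) := by
    refine mul_right_cancel₀ hφg ?_
    rw [hz (N + 1), Finset.sum_mul]
    have hterm : ∀ i : Fin (N + 1), φ (e i) * z ^ p ^ (i : ℕ) * φ g = φ (e i * c i) := by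
      intro i
      rw [mul_assoc, hz i, map_mul]
    rw [Finset.sum_congr rfl fun i _ => hterm i, ← map_sum, he]
  have hint : IsIntegral A z := by
    refine ⟨X ^ p ^ (N + 1) - ∑ i : Fin (N + 1), C (e i) * X ^ p ^ (i : ℕ), ?_, ?_⟩
    · apply monic_X_pow_sub
      refine lt_of_le_of_lt (degree_sum_le _ _) ?_
      rw [Finset.sup_lt_iff (by exact_mod_cast WithBot.bot_lt_coe (p ^ (N + 1)))]
      intro i _
      refine lt_of_le_of_lt (degree_C_mul_X_pow_le _ _) ?_
      exact_mod_cast Nat.pow_lt_pow_right hp i.isLt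
    · rw [eval₂_sub, eval₂_X_pow, eval₂_finset_sum, sub_eq_zero, hzN]
      exact Finset.sum_congr rfl fun i _ => by rw [eval₂_mul, eval₂_C, eval₂_X_pow]
  obtain ⟨w, hw⟩ := IsIntegrallyClosed.isIntegral_iff.mp hint
  refine ⟨w, hφ ?_⟩
  rw [map_mul, hw, hzdef, div_mul_cancel₀ _ hφa']

/-- Let `A` be a Noetherian integrally closed domain of characteristic `p`, and let `B` be
its perfect closure `A^{1/p^∞}` (a perfect ring containing `A` such that every element has
some `p`-power in `A`).  Let `0 ≠ f, g ∈ A` and let `J = g^{1/p^∞}·B` be the ideal generated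
by all `p`-power roots `g^{1/p^n}` of `g`.  Then:
(1) the natural map `B → Hom_B(J, B)`, sending `x` to multiplication by `x`, is bijective;
(2) the induced map `B/(f) → Hom_B(J, B/(f))` is injective, i.e. if `x·J ⊆ (f)` then
`x ∈ (f)`. -/
theorem stmt_7 (p : ℕ) [Fact p.Prime]
    (A : Type*) [CommRing A] [IsDomain A] [IsNoetherianRing A] [IsIntegrallyClosed A]
    [CharP A p]
    (B : Type*) [CommRing B] [CharP B p] [ExpChar B p] [PerfectRing B p]
    [Algebra A B] (hinj : Function.Injective (algebraMap A B))
    (hroots : ∀ b : B, ∃ n : ℕ, b ^ p ^ n ∈ (algebraMap A B).range)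
    (f g : A) (hf : f ≠ 0) (hg : g ≠ 0)
    (J : Ideal B)
    (hJ : J = Ideal.span (Set.range fun n : ℕ =>
      ((frobeniusEquiv B p).symm)^[n] (algebraMap A B g))) :
    Function.Bijective (fun x : B => (LinearMap.lsmul B B x).comp J.subtype) ∧
    ∀ x : B, (∀ j ∈ J, x * j ∈ Ideal.span {algebraMap A B f}) →
      x ∈ Ideal.span {algebraMap A B f} := by
  have hp : p.Prime := Fact.out
  have hppos : p ≠ 0 := hp.ne_zero
  haveI : Nontrivial B := CharP.nontrivial_of_char_ne_one hp.ne_one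
  -- powers of the Frobenius are injective on B
  have hfrobinj : ∀ (x : B) (n : ℕ), x ^ p ^ n = 0 → x = 0 := by
    intro x n hx
    have hbij := (bijective_frobenius B p).iterate n
    have h0 : (frobenius B p)^[n] x = (frobenius B p)^[n] 0 := by
      rw [iterate_frobenius, iterate_frobenius, hx, zero_pow (pow_ne_zero n hppos)]
    exact hbij.1 h0
  -- B is a domain
  haveI : NoZeroDivisors B := by
    constructor
    intro x y hxy
    obtain ⟨n, a, ha⟩ := hroots x
    obtain ⟨m, b, hb⟩ := hroots y
    have h1 : algebraMap A B (a ^ p ^ m * b ^ p ^ n) = 0 := by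
      rw [map_mul, map_pow, map_pow, ha, hb, ← pow_mul, ← pow_mul, ← pow_add, ← pow_add,
        Nat.add_comm m n, ← mul_pow, hxy, zero_pow (pow_ne_zero _ hppos)]
    have h2 : a ^ p ^ m * b ^ p ^ n = 0 := hinj (by rw [h1, map_zero])
    rcases mul_eq_zero.mp h2 with h | h
    · refine Or.inl (hfrobinj x n ?_)
      rw [pow_eq_zero_iff (pow_ne_zero m hppos)] at h
      rw [← ha, h, map_zero]
    · refine Or.inr (hfrobinj y m ?_)
      rw [pow_eq_zero_iff (pow_ne_zero n hppos)] at h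
      rw [← hb, h, map_zero]
  haveI : IsDomain B := NoZeroDivisors.to_isDomain B
  -- the fraction field of B
  set K := FractionRing B with hKdef
  have hι : Function.Injective (algebraMap B K) := IsFractionRing.injective B K
  haveI : CharP K p := charP_of_injective_algebraMap hι p
  haveI : ExpChar K p := ExpChar.prime hp
  -- p-power roots are unique in K
  have hKcancel : ∀ (u v : K) (n : ℕ), u ^ p ^ n = v ^ p ^ n → u = v := by
    intro u v n h
    have h0 : (u - v) ^ p ^ n = 0 := by rw [sub_pow_expChar_pow, h, sub_self]
    exact sub_eq_zero.mp (pow_eq_zero_iff (pow_ne_zero n hppos) |>.mp h0)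
  -- iterated Frobenius inverse takes p^n-th roots
  have hroot : ∀ (x : B) (n : ℕ), (((frobeniusEquiv B p).symm)^[n] x) ^ p ^ n = x := by
    intro x n
    induction n with
    | zero => simp
    | succ n ih =>
      rw [Function.iterate_succ_apply', pow_succ, Nat.mul_comm (p ^ n) p, pow_mul,
        frobeniusEquiv_symm_pow_p, ih]
  set R : ℕ → B := fun n => ((frobeniusEquiv B p).symm)^[n] (algebraMap A B g) with hRdef
  have hRpow : ∀ n, R n ^ p ^ n = algebraMap A B g := fun n => hroot _ n
  have hRmem : ∀ n, R n ∈ J := by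
    intro n
    rw [hJ]
    exact Ideal.subset_span ⟨n, rfl⟩
  have hgB : algebraMap A B g ≠ 0 := fun h => hg (hinj (h.trans (map_zero _).symm))
  have hRne : ∀ n, R n ≠ 0 := by
    intro n h
    exact hgB (by rw [← hRpow n, h, zero_pow (pow_ne_zero n hppos)])
  -- THE KEY LEMMA
  have L : ∀ y : K, (∀ n, ∃ b : B, y * algebraMap B K (R n) = algebraMap B K b) →
      ∃ b : B, algebraMap B K b = y := by
    intro y hy
    obtain ⟨b0, b0', hb0', hquot⟩ := IsFractionRing.div_surjective (A := B) y
    have hb0'ne : b0' ≠ 0 := mem_nonZeroDivisors_iff_ne_zero.mp hb0'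
    obtain ⟨n1, a1, ha1⟩ := hroots b0
    obtain ⟨n2, a2, ha2⟩ := hroots b0'
    set n := n1 + n2 with hndef
    set a : A := a1 ^ p ^ n2 with hadef
    set a' : A := a2 ^ p ^ n1 with ha'def
    have hba : b0 ^ p ^ n = algebraMap A B a := by
      rw [hndef, pow_add, pow_mul, ← ha1, hadef, ← map_pow]
    have hba' : b0' ^ p ^ n = algebraMap A B a' := by
      rw [hndef, Nat.add_comm n1 n2, pow_add, pow_mul, ← ha2, ha'def, ← map_pow]
    have ha'ne : a' ≠ 0 := by
      intro h
      apply hb0'ne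
      apply hfrobinj b0' n
      rw [hba', h, map_zero]
    have ha'Bne : algebraMap A B a' ≠ 0 := fun h => ha'ne (hinj (h.trans (map_zero _).symm))
    have ha'Kne : algebraMap B K (algebraMap A B a') ≠ 0 :=
      fun h => ha'Bne (hι (h.trans (map_zero _).symm))
    have hb0K : algebraMap B K b0' ≠ 0 := fun h => hb0'ne (hι (h.trans (map_zero _).symm))
    have hypow : ∀ m : ℕ, y ^ p ^ (n + m) * algebraMap B K (algebraMap A B (a' ^ p ^ m))
        = algebraMap B K (algebraMap A B (a ^ p ^ m)) := by
      intro m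
      rw [← hquot, div_pow, div_mul_eq_mul_div, div_eq_iff (pow_ne_zero _ hb0K),
        ← map_pow, ← map_pow, pow_add, pow_mul, pow_mul, hba, hba', ← map_pow, ← map_pow]
    -- for each m, a' ^ p ^ m divides a ^ p ^ m * g inside B
    have hd : ∀ m : ℕ, ∃ d : B,
        algebraMap A B (a ^ p ^ m * g) = algebraMap A B (a' ^ p ^ m) * d := by
      intro m
      obtain ⟨bm, hbm⟩ := hy (n + m)
      refine ⟨bm ^ p ^ (n + m), ?_⟩
      apply hι
      have h1 : (y * algebraMap B K (R (n + m))) ^ p ^ (n + m)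
          = algebraMap B K bm ^ p ^ (n + m) := by rw [hbm]
      rw [mul_pow, ← map_pow, hRpow] at h1
      have h2 := hypow m
      simp only [map_mul, map_pow] at h2 ⊢
      rw [← h2, ← h1]
      ring
    -- upgrade to divisibility inside A, using integral closedness
    have hc : ∀ m : ℕ, ∃ cm : A, cm * a' ^ p ^ m = a ^ p ^ m * g := by
      intro m
      obtain ⟨d, hdm⟩ := hd m
      obtain ⟨k, em, hem⟩ := hroots d
      have hA : (a ^ p ^ m * g) ^ p ^ k = (a' ^ p ^ m) ^ p ^ k * em := by
        apply hinj
        rw [map_pow, hdm]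
        simp only [map_mul, map_pow, mul_pow]
        rw [hem]
      have hφ : Function.Injective (algebraMap A (FractionRing A)) :=
        IsFractionRing.injective A (FractionRing A)
      have hden : algebraMap A (FractionRing A) (a' ^ p ^ m) ≠ 0 :=
        fun h => pow_ne_zero _ ha'ne (hφ (h.trans (map_zero _).symm))
      have hden2 : algebraMap A (FractionRing A) ((a' ^ p ^ m) ^ p ^ k) ≠ 0 :=
        fun h => pow_ne_zero _ (pow_ne_zero _ ha'ne) (hφ (h.trans (map_zero _).symm))
      have ht : (algebraMap A (FractionRing A) (a ^ p ^ m * g)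
          / algebraMap A (FractionRing A) (a' ^ p ^ m)) ^ p ^ k
          = algebraMap A (FractionRing A) em := by
        rw [div_pow, ← map_pow, ← map_pow, hA, map_mul, mul_comm, mul_div_assoc,
          div_self hden2, mul_one]
      obtain ⟨w, hw⟩ := aux_root _ (p ^ k) (pow_ne_zero k hppos) em ht
      refine ⟨w, hφ ?_⟩
      rw [map_mul, hw, div_mul_cancel₀ _ hden]
    choose c hc using hc
    obtain ⟨w, hw⟩ := aux_core p hp.one_lt a a' g ha'ne hg c hc
    have hyn : y ^ p ^ n = algebraMap B K (algebraMap A B w) := by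
      have h0 := hypow 0
      simp only [pow_zero, pow_one, Nat.add_zero] at h0
      refine mul_right_cancel₀ ha'Kne ?_
      rw [h0, ← map_mul, ← map_mul, hw]
    refine ⟨((frobeniusEquiv B p).symm)^[n] (algebraMap A B w), hKcancel _ _ n ?_⟩
    rw [← map_pow, hroot, hyn]
  -- conclusion
  refine ⟨⟨?_, ?_⟩, ?_⟩
  · -- injectivity
    intro x₁ x₂ hx
    have h := LinearMap.congr_fun hx ⟨R 0, hRmem 0⟩
    simp only [LinearMap.coe_comp, Function.comp_apply, Submodule.coe_subtype,
      LinearMap.lsmul_apply, smul_eq_mul] at h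
    exact mul_right_cancel₀ (hRne 0) h
  · -- surjectivity
    intro φ
    have hswap : ∀ m k : ℕ, R m * φ ⟨R k, hRmem k⟩ = R k * φ ⟨R m, hRmem m⟩ := by
      intro m k
      have h1 : R m • (⟨R k, hRmem k⟩ : J) = R k • (⟨R m, hRmem m⟩ : J) :=
        Subtype.ext (mul_comm (R m) (R k))
      have h2 := congrArg φ h1
      rwa [map_smul, map_smul, smul_eq_mul, smul_eq_mul] at h2
    set y : K := algebraMap B K (φ ⟨R 0, hRmem 0⟩) / algebraMap B K (R 0) with hydef
    have hR0K : algebraMap B K (R 0) ≠ 0 := fun h => hRne 0 (hι (h.trans (map_zero _).symm))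
    have hside : ∀ k, ∃ b : B, y * algebraMap B K (R k) = algebraMap B K b := by
      intro k
      refine ⟨φ ⟨R k, hRmem k⟩, ?_⟩
      rw [hydef, div_mul_eq_mul_div, div_eq_iff hR0K, ← map_mul, ← map_mul]
      exact congrArg _ (by linear_combination - hswap 0 k)
    obtain ⟨b, hb⟩ := L y hside
    have hb0 : b * R 0 = φ ⟨R 0, hRmem 0⟩ := by
      apply hι
      rw [map_mul, hb, hydef, div_mul_cancel₀ _ hR0K]
    have hgen : ∀ k, φ ⟨R k, hRmem k⟩ = b * R k := by
      intro k
      refine mul_left_cancel₀ (hRne 0) ?_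
      rw [hswap 0 k, ← hb0]
      ring
    refine ⟨b, ?_⟩
    apply LinearMap.ext
    rintro ⟨x, hx⟩
    simp only [LinearMap.coe_comp, Function.comp_apply, Submodule.coe_subtype,
      LinearMap.lsmul_apply, smul_eq_mul]
    have hx' : x ∈ Ideal.span (Set.range R) := by rw [← hJ]; exact hx
    have main : ∀ z : B, z ∈ Ideal.span (Set.range R) →
        ∀ hz : z ∈ J, φ ⟨z, hz⟩ = b * z := by
      intro z hzspan
      refine Submodule.span_induction ?_ ?_ ?_ ?_ hzspan
      · rintro _ ⟨k, rfl⟩ hz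
        exact hgen k
      · intro hz
        have h0 : (⟨0, hz⟩ : J) = 0 := rfl
        rw [h0, map_zero, mul_zero]
      · intro u v hu hv ihu ihv huv
        have h0 : (⟨u + v, huv⟩ : J) = ⟨u, hJ ▸ hu⟩ + ⟨v, hJ ▸ hv⟩ := rfl
        rw [h0, map_add, ihu (hJ ▸ hu), ihv (hJ ▸ hv), mul_add]
      · intro r u hu ihu hru
        have h0 : (⟨r • u, hru⟩ : J) = r • ⟨u, hJ ▸ hu⟩ := rfl
        rw [h0, map_smul, smul_eq_mul, ihu (hJ ▸ hu), smul_eq_mul]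
        ring
    exact (main x hx' hx).symm
  · -- part (2)
    intro x hx
    have hfB : algebraMap A B f ≠ 0 := fun h => hf (hinj (h.trans (map_zero _).symm))
    have hfK : algebraMap B K (algebraMap A B f) ≠ 0 :=
      fun h => hfB (hι (h.trans (map_zero _).symm))
    have hside : ∀ k, ∃ b : B, (algebraMap B K x / algebraMap B K (algebraMap A B f))
        * algebraMap B K (R k) = algebraMap B K b := by
      intro k
      obtain ⟨b, hbk⟩ := Ideal.mem_span_singleton'.mp (hx (R k) (hRmem k))
      refine ⟨b, ?_⟩
      rw [div_mul_eq_mul_div, div_eq_iff hfK, ← map_mul, ← map_mul]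
      exact congrArg _ hbk.symm
    obtain ⟨b, hb⟩ := L _ hside
    have hxx : x = algebraMap A B f * b := by
      apply hι
      rw [map_mul, hb]
      rw [mul_comm, div_mul_cancel₀ _ hfK]
    exact Ideal.mem_span_singleton'.mpr ⟨b, by rw [hxx]; ring⟩
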